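/- If h is an entire function on ℂ, not identically zero, then there is no C² function u : ℂ → ℝ satisfying Δu = 4|h(z)|²e^{2u} on all of ℂ. -/

import Mathlib

open Filter


open Complex

/-- Euclidean Laplacian of a real-valued function on `ℂ`. -/
noncomputable def lap (u : ℂ → ℝ) (z : ℂ) : ℝ :=
  fderiv ℝ (fun w => fderiv ℝ u w 1) z 1 + fderiv ℝ (fun w => fderiv ℝ u w Complex.I) z Complex.I


/-! ### Auxiliary lemmas -/


lemma lap_congr {f g : ℂ → ℝ} {z : ℂ} (hfg : f =ᶠ[nhds z] g) : lap f z = lap g z := by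
  have h1 : (fun w => fderiv ℝ f w 1) =ᶠ[nhds z] (fun w => fderiv ℝ g w 1) := by
    filter_upwards [hfg.eventuallyEq_nhds] with w hw
    rw [hw.fderiv_eq]
  have h2 : (fun w => fderiv ℝ f w Complex.I) =ᶠ[nhds z] (fun w => fderiv ℝ g w Complex.I) := by
    filter_upwards [hfg.eventuallyEq_nhds] with w hw
    rw [hw.fderiv_eq]
  unfold lap
  rw [h1.fderiv_eq, h2.fderiv_eq]

lemma second_deriv_test {q q' : ℝ → ℝ} {a : ℝ}
    (hq : ∀ᶠ t in nhds 0, HasDerivAt q (q' t) t)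
    (hq'' : HasDerivAt q' a 0) (hmax : IsLocalMax q 0) : a ≤ 0 := by
  by_contra hpos
  push_neg at hpos
  have hq'0 : q' 0 = 0 := hmax.hasDerivAt_eq_zero (hq.self_of_nhds)
  have hslope : Tendsto (slope q' 0) (nhdsWithin 0 {0}ᶜ) (nhds a) :=
    hasDerivAt_iff_tendsto_slope.1 hq''
  have hev : ∀ᶠ t in nhdsWithin 0 {0}ᶜ, 0 < slope q' 0 t :=
    hslope.eventually (eventually_gt_nhds hpos)
  rw [eventually_nhdsWithin_iff] at hev
  obtain ⟨ε, hε, hball⟩ := Metric.eventually_nhds_iff.1 (hev.and hq)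
  set δ := ε / 2 with hδ
  have hδpos : 0 < δ := by positivity
  have hsub : ∀ t ∈ Set.Icc (0:ℝ) δ, 0 ≤ t ∧ dist t (0:ℝ) < ε := by
    intro t ht
    refine ⟨ht.1, ?_⟩
    rw [Real.dist_eq, sub_zero, _root_.abs_of_nonneg ht.1]
    linarith [ht.2]
  have hmono : StrictMonoOn q (Set.Icc (0:ℝ) δ) := by
    apply strictMonoOn_of_deriv_pos (convex_Icc _ _)
    · intro t ht
      exact ((hball (hsub t ht).2).2.continuousAt).continuousWithinAt
    · intro t ht
      rw [interior_Icc] at ht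
      have h1 := hball (hsub t ⟨le_of_lt ht.1, le_of_lt ht.2⟩).2
      rw [(h1.2.deriv)]
      have h2 := h1.1 (by simp [ne_of_gt ht.1] : t ∈ ({0}ᶜ : Set ℝ))
      rw [slope_def_field, hq'0, sub_zero, sub_zero] at h2
      have := mul_pos h2 ht.1
      rwa [div_mul_cancel₀ _ (ne_of_gt ht.1)] at this
  obtain ⟨ε', hε', hb⟩ := Metric.eventually_nhds_iff.1 hmax
  have hle : ∀ t, 0 ≤ t → t ≤ min δ (ε'/2) → q t ≤ q 0 := by
    intro t ht1 ht2
    apply hb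
    rw [Real.dist_eq, sub_zero, _root_.abs_of_nonneg ht1]
    calc t ≤ min δ (ε'/2) := ht2
    _ ≤ ε'/2 := min_le_right _ _
    _ < ε' := by linarith
  have hmin : 0 < min δ (ε'/2) := lt_min hδpos (by positivity)
  have hle' : q (min δ (ε'/2)) ≤ q 0 := hle _ (le_of_lt hmin) le_rfl
  have : q 0 < q (min δ (ε'/2)) :=
    hmono (Set.left_mem_Icc.2 (le_of_lt hδpos)) ⟨le_of_lt hmin, min_le_left _ _⟩ hmin
  linarith

lemma dir2_nonpos {v : ℂ → ℝ} {p d : ℂ}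
    (hv : ContDiffAt ℝ 2 v p) (hmax : IsLocalMax v p) :
    fderiv ℝ (fun w => fderiv ℝ v w d) p d ≤ 0 := by
  have hf' : ContDiffAt ℝ 1 (fderiv ℝ v) p := hv.fderiv_right (by norm_num)
  have hline : ∀ t : ℝ, HasDerivAt (fun s : ℝ => p + s • d) d t := by
    intro t
    simpa using ((hasDerivAt_id t).smul_const d).const_add p
  have hcont : Continuous (fun s : ℝ => p + s • d) := by continuity
  have htends : Tendsto (fun s : ℝ => p + s • d) (nhds 0) (nhds p) := by
    have := hcont.tendsto 0
    simpa using this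
  have hdiff : ∀ᶠ w in nhds p, DifferentiableAt ℝ v w := by
    filter_upwards [hv.eventually (by norm_num)] with w hw
    exact hw.differentiableAt two_ne_zero
  set q : ℝ → ℝ := fun t => v (p + t • d) with hqdef
  set q' : ℝ → ℝ := fun t => fderiv ℝ v (p + t • d) d with hq'def
  have hq : ∀ᶠ t in nhds 0, HasDerivAt q (q' t) t := by
    filter_upwards [htends.eventually hdiff] with t ht
    exact (ht.hasFDerivAt.comp_hasDerivAt t (hline t))
  have happ : HasFDerivAt (fun w => fderiv ℝ v w d)
      ((ContinuousLinearMap.apply ℝ ℝ d).comp (fderiv ℝ (fderiv ℝ v) p)) p :=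
    (ContinuousLinearMap.apply ℝ ℝ d).hasFDerivAt.comp p
      ((hf'.differentiableAt one_ne_zero).hasFDerivAt)
  have hq'' : HasDerivAt q' ((fderiv ℝ (fderiv ℝ v) p d) d) 0 := by
    have happ0 : HasFDerivAt (fun w => fderiv ℝ v w d)
        ((ContinuousLinearMap.apply ℝ ℝ d).comp (fderiv ℝ (fderiv ℝ v) p)) (p + (0:ℝ) • d) := by
      simpa using happ
    have := happ0.comp_hasDerivAt 0 (hline 0)
    exact this
  have hqmax : IsLocalMax q 0 := by
    have h0 : ∀ᶠ t : ℝ in nhds 0, v (p + t • d) ≤ v p := htends.eventually hmax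
    filter_upwards [h0] with t ht
    simpa [hqdef] using ht
  have := second_deriv_test hq hq'' hqmax
  rwa [happ.fderiv]

lemma lap_nonpos_of_isLocalMax {v : ℂ → ℝ} {p : ℂ}
    (hv : ContDiffAt ℝ 2 v p) (hmax : IsLocalMax v p) : lap v p ≤ 0 := by
  unfold lap
  exact add_nonpos (dir2_nonpos hv hmax) (dir2_nonpos hv hmax)

lemma fderiv_apply_diffAt {f : ℂ → ℝ} {z : ℂ} (d : ℂ) (hf : ContDiffAt ℝ 2 f z) :
    DifferentiableAt ℝ (fun w => fderiv ℝ f w d) z :=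
  ((ContinuousLinearMap.apply ℝ ℝ d).differentiable.differentiableAt).comp z
    ((hf.fderiv_right (m := 1) (by norm_num)).differentiableAt one_ne_zero)

lemma lap_add {f g : ℂ → ℝ} {z : ℂ} (hf : ContDiffAt ℝ 2 f z) (hg : ContDiffAt ℝ 2 g z) :
    lap (fun w => f w + g w) z = lap f z + lap g z := by
  have key : ∀ d : ℂ, fderiv ℝ (fun w => fderiv ℝ (fun x => f x + g x) w d) z d
      = fderiv ℝ (fun w => fderiv ℝ f w d) z d + fderiv ℝ (fun w => fderiv ℝ g w d) z d := by
    intro d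
    have hev : (fun w => fderiv ℝ (fun x => f x + g x) w d) =ᶠ[nhds z]
        (fun w => fderiv ℝ f w d + fderiv ℝ g w d) := by
      filter_upwards [hf.eventually (by norm_num), hg.eventually (by norm_num)] with w hfw hgw
      rw [fderiv_fun_add (hfw.differentiableAt two_ne_zero) (hgw.differentiableAt two_ne_zero)]
      rfl
    rw [hev.fderiv_eq, fderiv_fun_add (fderiv_apply_diffAt d hf) (fderiv_apply_diffAt d hg)]
    rfl
  unfold lap
  rw [key 1, key Complex.I]
  ring

lemma lap_add_const {f : ℂ → ℝ} {z : ℂ} (c : ℝ) :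
    lap (fun w => f w + c) z = lap f z := by
  have h : ∀ d : ℂ, (fun w => fderiv ℝ (fun x => f x + c) w d) = (fun w => fderiv ℝ f w d) := by
    intro d; funext w; rw [fderiv_add_const]
  unfold lap
  rw [h 1, h Complex.I]

lemma re_fderiv_apply {f : ℂ → ℂ} {f' z : ℂ} (hf : HasDerivAt f f' z) (d : ℂ) :
    fderiv ℝ (fun w => (f w).re) z d = (d * f').re := by
  have h2 : HasFDerivAt (fun w => (f w).re)
      (Complex.reCLM.comp ((ContinuousLinearMap.smulRight (1 : ℂ →L[ℂ] ℂ) f').restrictScalars ℝ))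
      z := (Complex.reCLM.hasFDerivAt.comp z (hf.hasFDerivAt.restrictScalars ℝ))
  rw [h2.fderiv]
  simp [smul_eq_mul]

lemma lap_re_holo {f : ℂ → ℂ} {s : Set ℂ} (hs : IsOpen s) (hf : DifferentiableOn ℂ f s)
    {z : ℂ} (hz : z ∈ s) : lap (fun w => (f w).re) z = 0 := by
  have hA : AnalyticOnNhd ℂ f s := hf.analyticOnNhd hs
  have hD : AnalyticOnNhd ℂ (deriv f) s := hA.deriv
  have key : ∀ d : ℂ, fderiv ℝ (fun w => fderiv ℝ (fun x => (f x).re) w d) z d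
      = (d * (d * deriv (deriv f) z)).re := by
    intro d
    have hev : (fun w => fderiv ℝ (fun x => (f x).re) w d) =ᶠ[nhds z]
        (fun w => (d * deriv f w).re) := by
      filter_upwards [hs.eventually_mem hz] with w hw
      exact re_fderiv_apply ((hA w hw).differentiableAt.hasDerivAt) d
    rw [hev.fderiv_eq]
    have hg : HasDerivAt (fun w => d * deriv f w) (d * deriv (deriv f) z) z :=
      ((hD z hz).differentiableAt.hasDerivAt).const_mul d
    exact re_fderiv_apply hg d
  unfold lap
  rw [key 1, key Complex.I]
  have : Complex.I * (Complex.I * deriv (deriv f) z) = -(deriv (deriv f) z) := by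
    rw [← mul_assoc, Complex.I_mul_I]; ring
  rw [this]
  simp

lemma lap_log_abs {h : ℂ → ℂ} (hh : Differentiable ℂ h) {z : ℂ} (hz : h z ≠ 0) :
    lap (fun w => Real.log (‖h w‖)) z = 0 := by
  set s : Set ℂ := {w | h w / h z ∈ Complex.slitPlane} with hsdef
  have hsopen : IsOpen s := Complex.isOpen_slitPlane.preimage (hh.continuous.div_const _)
  have hzs : z ∈ s := by
    simp only [hsdef, Set.mem_setOf_eq, div_self hz]
    exact Complex.one_mem_slitPlane
  set f : ℂ → ℂ := fun w => Complex.log (h w / h z) with hfdef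
  have hfdiff : DifferentiableOn ℂ f s := by
    intro w hw
    exact ((hh.differentiableAt.div_const _).clog hw).differentiableWithinAt
  have hev : (fun w => Real.log (‖h w‖)) =ᶠ[nhds z]
      (fun w => (f w).re + Real.log (‖h z‖)) := by
    filter_upwards [hsopen.eventually_mem hzs] with w hw
    have hwne : h w ≠ 0 := by
      intro h0
      apply Complex.slitPlane_ne_zero hw
      rw [h0, zero_div]
    rw [hfdef]
    simp only [Complex.log_re, map_div₀, norm_div]
    rw [Real.log_div (by simpa using hwne) (by simpa using hz)]
    ring
  rw [lap_congr hev, lap_add_const, lap_re_holo hsopen hfdiff hzs]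

noncomputable def dN (w : ℂ) : ℂ →L[ℝ] ℝ :=
  (2*w.re) • Complex.reCLM + (2*w.im) • Complex.imCLM

lemma hasFDerivAt_normSq (w : ℂ) : HasFDerivAt Complex.normSq (dN w) w := by
  have h1 : HasFDerivAt (fun z : ℂ => z.re * z.re + z.im * z.im)
      ((w.re • Complex.reCLM + w.re • Complex.reCLM) +
        (w.im • Complex.imCLM + w.im • Complex.imCLM)) w := by
    exact ((Complex.reCLM.hasFDerivAt.mul Complex.reCLM.hasFDerivAt).add
      (Complex.imCLM.hasFDerivAt.mul Complex.imCLM.hasFDerivAt))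
  have he : (fun z : ℂ => z.re * z.re + z.im * z.im) = Complex.normSq := by
    funext z; rw [Complex.normSq_apply]
  rw [he] at h1
  convert h1 using 1
  ext v
  simp [dN]
  ring

lemma contDiff_normSq : ContDiff ℝ 2 Complex.normSq := by
  have he : (fun z : ℂ => z.re * z.re + z.im * z.im) = Complex.normSq := by
    funext z; rw [Complex.normSq_apply]
  rw [← he]
  exact (Complex.reCLM.contDiff.mul Complex.reCLM.contDiff).add
    (Complex.imCLM.contDiff.mul Complex.imCLM.contDiff)

lemma dN_apply_one (w : ℂ) : dN w 1 = 2*w.re := by simp [dN]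
lemma dN_apply_I (w : ℂ) : dN w Complex.I = 2*w.im := by simp [dN]

lemma barrier_hasFDerivAt {R : ℝ} {w : ℂ} (hw : Complex.normSq w < R^2) :
    HasFDerivAt (fun x => Real.log (R^2 - Complex.normSq x))
      ((R^2 - Complex.normSq w)⁻¹ • (-(dN w))) w := by
  have hinner : HasFDerivAt (fun x : ℂ => R^2 - Complex.normSq x) (-(dN w)) w :=
    (hasFDerivAt_normSq w).const_sub (R^2)
  exact hinner.log (by linarith)

lemma lap_barrier {R : ℝ} {p : ℂ} (hp : Complex.normSq p < R^2) :
    lap (fun w => Real.log (R^2 - Complex.normSq w)) p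
      = -(4*R^2/(R^2 - Complex.normSq p)^2) := by
  set D : ℝ := R^2 - Complex.normSq p with hD
  have hDpos : 0 < D := by rw [hD]; linarith
  have hopen : IsOpen {w : ℂ | Complex.normSq w < R^2} :=
    isOpen_lt Complex.continuous_normSq continuous_const
  have hps : p ∈ {w : ℂ | Complex.normSq w < R^2} := hp
  have hev1 : (fun w => fderiv ℝ (fun x => Real.log (R^2 - Complex.normSq x)) w 1)
      =ᶠ[nhds p] (fun w => (-(2*w.re)) * (R^2 - Complex.normSq w)⁻¹) := by
    filter_upwards [hopen.eventually_mem hps] with w hw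
    rw [(barrier_hasFDerivAt hw).fderiv]
    simp [dN_apply_one (w := w)]
    ring
  have hevI : (fun w => fderiv ℝ (fun x => Real.log (R^2 - Complex.normSq x)) w Complex.I)
      =ᶠ[nhds p] (fun w => (-(2*w.im)) * (R^2 - Complex.normSq w)⁻¹) := by
    filter_upwards [hopen.eventually_mem hps] with w hw
    rw [(barrier_hasFDerivAt hw).fderiv]
    simp [dN_apply_I (w := w)]
    ring
  have hinv : HasFDerivAt (fun x : ℂ => (R^2 - Complex.normSq x)⁻¹)
      (-((R^2 - Complex.normSq p)^2)⁻¹ • -(dN p)) p := by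
    simpa [Function.comp_def, hD] using (hasDerivAt_inv hDpos.ne').comp_hasFDerivAt p
      ((hasFDerivAt_normSq p).const_sub (R^2))
  have hre : (fun w : ℂ => -(2*w.re)) = ⇑((-2:ℝ) • Complex.reCLM) := by
    funext v; simp
  have him : (fun w : ℂ => -(2*w.im)) = ⇑((-2:ℝ) • Complex.imCLM) := by
    funext v; simp
  have hg1 := (hre ▸ ((-2:ℝ) • Complex.reCLM).hasFDerivAt (x := p)).fun_mul hinv
  have hgI := (him ▸ ((-2:ℝ) • Complex.imCLM).hasFDerivAt (x := p)).fun_mul hinv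
  unfold lap
  rw [hev1.fderiv_eq, hevI.fderiv_eq, hg1.fderiv, hgI.fderiv]
  simp only [ContinuousLinearMap.add_apply, ContinuousLinearMap.smul_apply,
    ContinuousLinearMap.smulRight_apply, ContinuousLinearMap.neg_apply,
    dN_apply_one, dN_apply_I, Complex.reCLM_apply, Complex.imCLM_apply,
    Complex.one_re, Complex.one_im, Complex.I_re, Complex.I_im, smul_eq_mul]
  rw [← hD]
  have hnorm : Complex.normSq p = p.re^2 + p.im^2 := by
    rw [Complex.normSq_apply]; ring
  have hR2 : R^2 = D + Complex.normSq p := by rw [hD]; ring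
  rw [hR2, hnorm]
  field_simp
  ring

/-- If `h` is entire and not identically zero, then `Δu = 4|h|²e^{2u}` has no C²
solution `u : ℂ → ℝ` on the whole plane. -/
theorem no_entire_solution
    (h : ℂ → ℂ) (hh : Differentiable ℂ h) (hne : ∃ z : ℂ, h z ≠ 0) :
    ¬ ∃ u : ℂ → ℝ, ContDiff ℝ 2 u ∧
      ∀ z : ℂ, lap u z = 4 * ‖h z‖^2 * Real.exp (2 * u z) := by
  rintro ⟨u, hu, heq⟩
  obtain ⟨z₀, hz₀⟩ := hne
  set c : ℝ := ‖h z₀‖ * Real.exp (u z₀) with hc_def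
  have hc : 0 < c := mul_pos (by simpa using hz₀) (Real.exp_pos _)
  have hN₀ : (0:ℝ) ≤ Complex.normSq z₀ := Complex.normSq_nonneg z₀
  -- Key estimate, for every large radius R
  have key : ∀ R : ℝ, 1 ≤ R → Complex.normSq z₀ + 1 ≤ R →
      c * (R^2 - Complex.normSq z₀) ≤ R := by
    intro R hR1 hRz
    set G : ℂ → ℝ := fun z => ‖h z‖ * Real.exp (u z) * (R^2 - Complex.normSq z)
      with hG_def
    have hGcont : Continuous G := by
      apply Continuous.mul
      · exact (hh.continuous.norm).mul (Real.continuous_exp.comp hu.continuous)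
      · exact continuous_const.sub Complex.continuous_normSq
    have hz₀mem : z₀ ∈ Metric.closedBall (0:ℂ) R := by
      rw [Metric.mem_closedBall, dist_zero_right]
      have hns : Complex.normSq z₀ = ‖z₀‖^2 := by
        rw [Complex.normSq_eq_norm_sq]
      nlinarith [norm_nonneg z₀]
    obtain ⟨p, hpmem, hpmax⟩ := (isCompact_closedBall (0:ℂ) R).exists_isMaxOn
      ⟨z₀, hz₀mem⟩ hGcont.continuousOn
    have hGz₀ : 0 < G z₀ := by
      have : 0 < R^2 - Complex.normSq z₀ := by nlinarith
      exact mul_pos hc this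
    have hGp_pos : 0 < G p := lt_of_lt_of_le hGz₀ (hpmax hz₀mem)
    have hglobal : ∀ z : ℂ, G z ≤ G p := by
      intro z
      by_cases hz : z ∈ Metric.closedBall (0:ℂ) R
      · exact hpmax hz
      · have hz' : R < ‖z‖ := by
          rw [Metric.mem_closedBall, dist_zero_right, not_le] at hz
          exact hz
        have h1 : R^2 - Complex.normSq z < 0 := by
          have : Complex.normSq z = ‖z‖^2 := by
            rw [Complex.normSq_eq_norm_sq]
          nlinarith [norm_nonneg z]
        have : G z ≤ 0 := mul_nonpos_of_nonneg_of_nonpos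
          (mul_nonneg (norm_nonneg _) (Real.exp_pos _).le) h1.le
        linarith
    -- two cases
    rcases le_or_gt (G p) R with hle | hgt
    · calc c * (R^2 - Complex.normSq z₀) = G z₀ := by rw [hG_def, hc_def]
      _ ≤ G p := hpmax hz₀mem
      _ ≤ R := hle
    · -- derive a contradiction
      exfalso
      have hRpos : (0:ℝ) < R := by linarith
      have hDp : 0 < R^2 - Complex.normSq p := by
        by_contra hD
        push_neg at hD
        have : G p ≤ 0 := mul_nonpos_of_nonneg_of_nonpos
          (mul_nonneg (norm_nonneg _) (Real.exp_pos _).le) hD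
        linarith
      have hhp : h p ≠ 0 := by
        intro h0
        have : G p = 0 := by rw [hG_def]; simp [h0]
        linarith
      -- the comparison function
      set v : ℂ → ℝ := fun z => (u z + (Complex.log (h z / h p)).re)
        + Real.log (R^2 - Complex.normSq z) with hv_def
      set s : Set ℂ := {w | h w / h p ∈ Complex.slitPlane} with hs_def
      have hsopen : IsOpen s := Complex.isOpen_slitPlane.preimage (hh.continuous.div_const _)
      have hps : p ∈ s := by
        simp only [hs_def, Set.mem_setOf_eq, div_self hhp]
        exact Complex.one_mem_slitPlane
      set W : Set ℂ := s ∩ {w | Complex.normSq w < R^2} with hW_def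
      have hWopen : IsOpen W := hsopen.inter (isOpen_lt Complex.continuous_normSq continuous_const)
      have hpW : p ∈ W := ⟨hps, by simpa using hDp⟩
      -- on W, v = log G - log |h p|
      have hvlog : ∀ z ∈ W, v z = Real.log (G z) - Real.log (‖h p‖) := by
        intro z hzW
        have hzne : h z ≠ 0 := by
          intro h0
          apply Complex.slitPlane_ne_zero hzW.1
          rw [h0, zero_div]
        have habs : (0:ℝ) < ‖h z‖ := by simpa using hzne
        have hDz : 0 < R^2 - Complex.normSq z := by
          have := hzW.2
          simp only [Set.mem_setOf_eq] at this
          linarith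
        rw [hG_def]
        rw [Real.log_mul (by positivity) (by positivity),
          Real.log_mul habs.ne' (Real.exp_pos _).ne', Real.log_exp]
        have : (Complex.log (h z / h p)).re
            = Real.log (‖h z‖) - Real.log (‖h p‖) := by
          rw [Complex.log_re, norm_div,
            Real.log_div habs.ne' (by simpa using hhp)]
        rw [hv_def]
        simp only []
        rw [this]
        ring
      -- p is a local max of v
      have hvmax : IsLocalMax v p := by
        filter_upwards [hWopen.eventually_mem hpW] with z hzW
        rw [hvlog z hzW, hvlog p hpW]
        have hGzpos : 0 < G z := by
          have hzne : h z ≠ 0 := by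
            intro h0
            apply Complex.slitPlane_ne_zero hzW.1
            rw [h0, zero_div]
          have hDz : 0 < R^2 - Complex.normSq z := by
            have := hzW.2; simp only [Set.mem_setOf_eq] at this; linarith
          have habs : (0:ℝ) < ‖h z‖ := by simpa using hzne
          positivity
        have := Real.log_le_log hGzpos (hglobal z)
        linarith
      -- smoothness of v at p
      have hre2 : ContDiffAt ℝ 2 (fun z => (Complex.log (h z / h p)).re) p := by
        have hfdiff : DifferentiableOn ℂ (fun w => Complex.log (h w / h p)) s := by
          intro w hw
          exact ((hh.differentiableAt.div_const _).clog hw).differentiableWithinAt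
        have hA : AnalyticOnNhd ℂ (fun w => Complex.log (h w / h p)) s :=
          hfdiff.analyticOnNhd hsopen
        have : ContDiffAt ℂ 2 (fun w => Complex.log (h w / h p)) p := (hA p hps).contDiffAt
        exact (Complex.reCLM.contDiff.comp_contDiffAt p (this.restrict_scalars ℝ))
      have hbar2 : ContDiffAt ℝ 2 (fun z => Real.log (R^2 - Complex.normSq z)) p := by
        have : ContDiffAt ℝ 2 (fun z : ℂ => R^2 - Complex.normSq z) p :=
          (contDiffAt_const.sub contDiff_normSq.contDiffAt)
        exact this.log hDp.ne'
      have hv2 : ContDiffAt ℝ 2 v p :=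
        ((hu.contDiffAt.add hre2).add hbar2)
      -- compute lap v p
      have hlap : lap v p = (4 * (‖h p‖)^2 * Real.exp (2 * u p))
          + (-(4*R^2/(R^2 - Complex.normSq p)^2)) := by
        have h1 : lap v p = lap (fun z => u z + (Complex.log (h z / h p)).re) p
            + lap (fun z => Real.log (R^2 - Complex.normSq z)) p :=
          lap_add (hu.contDiffAt.add hre2) hbar2
        have h2 : lap (fun z => u z + (Complex.log (h z / h p)).re) p
            = lap u p + lap (fun z => (Complex.log (h z / h p)).re) p :=
          lap_add hu.contDiffAt hre2
        have h3 : lap (fun z => (Complex.log (h z / h p)).re) p = 0 := by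
          apply lap_re_holo hsopen _ hps
          intro w hw
          exact ((hh.differentiableAt.div_const _).clog hw).differentiableWithinAt
        rw [h1, h2, h3, heq p, lap_barrier (by simpa using hDp)]
        ring
      have hnonpos : lap v p ≤ 0 := lap_nonpos_of_isLocalMax hv2 hvmax
      -- but lap v p > 0 since G p > R
      have hGpform : ‖h p‖ * Real.exp (u p) * (R^2 - Complex.normSq p) > R := hgt
      have hexp2 : Real.exp (2 * u p) = (Real.exp (u p))^2 := by
        rw [two_mul, Real.exp_add]; ring
      have habsp : (0:ℝ) < ‖h p‖ := by simpa using hhp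
      have hpos : 0 < lap v p := by
        rw [hlap, hexp2]
        rw [gt_iff_lt] at hGpform
        have hsq : R^2 < (‖h p‖ * Real.exp (u p) * (R^2 - Complex.normSq p))^2 := by
          nlinarith
        have hD2 : 0 < (R^2 - Complex.normSq p)^2 := by positivity
        rw [sub_pos.symm]
        have : 4*R^2/(R^2 - Complex.normSq p)^2
            < 4 * (‖h p‖)^2 * (Real.exp (u p))^2 := by
          rw [div_lt_iff₀ hD2]
          nlinarith
        linarith
      linarith
  -- now choose R large enough
  set R : ℝ := Complex.normSq z₀ + 1 + 1/c with hR_def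
  have hcinv : c * (1/c) = 1 := by field_simp
  have hR1 : 1 ≤ R := by
    have : 0 < 1/c := by positivity
    rw [hR_def]; linarith
  have hRz : Complex.normSq z₀ + 1 ≤ R := by
    have : 0 < 1/c := by positivity
    rw [hR_def]; linarith
  have := key R hR1 hRz
  -- c * (R^2 - N₀) ≤ R is impossible
  have hcR : c * R = c * Complex.normSq z₀ + c + 1 := by
    rw [hR_def]; field_simp
  nlinarith [mul_pos hc (lt_of_lt_of_le one_pos hR1 : (0:ℝ) < R), sq_nonneg R,
    mul_nonneg (mul_nonneg hc.le hN₀) (sub_nonneg.2 hR1)]
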